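/- For every x ∈ WΩ_{k[X̲]/k}, there exists ε > 0 such that γ_ε(x) ≠ −∞ if and only if there exists ε′ > 0 such that ζ_{ε′}(x) ≠ −∞. (Consequently the functions ζ_ε define the same overconvergent de Rham–Witt complex as the functions γ_ε of Davis–Langer–Zink.) -/

import Mathlib

/-!
Framework for the de Rham-Witt complex of a polynomial algebra, following
Davis-Langer-Zink and Langer-Zink, needed to state results on overconvergent
pseudovaluations.
-/

attribute [local instance] Classical.propDecidable

open scoped BigOperators

/-- A weight function: a map `Fin n → ℚ` with nonnegative values lying in `ℕ[1/p]`. -/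
structure WeightFun (p n : ℕ) where
  val : Fin n → ℚ
  nonneg : ∀ i, 0 ≤ val i
  mem_padicFrac : ∀ i, ∃ (c m : ℕ), val i = (c : ℚ) / (p : ℚ) ^ m

namespace WeightFun

variable {p n : ℕ}

/-- The support of a weight function. -/
noncomputable def supp (a : WeightFun p n) : Finset (Fin n) :=
  Finset.univ.filter fun i => a.val i ≠ 0

/-- The key used for the total order `⪯` on the support of `a`:
`i ⪯ i'` iff `val_p (a i) < val_p (a i')`, or they are equal and `i ≤ i'`. -/
noncomputable def key (a : WeightFun p n) (i : Fin n) : ℤ ×ₗ Fin n :=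
  toLex (padicValRat p (a.val i), i)

/-- `val_p(a) = min { val_p (a i) | i ∈ Supp a }` (with junk value `0` if `a = 0`). -/
noncomputable def valp (a : WeightFun p n) : ℤ :=
  if h : a.supp.Nonempty then
    (a.supp.image fun i => padicValRat p (a.val i)).min' (h.image _)
  else 0

/-- `u(a) = max {0, -val_p(a)}`. -/
noncomputable def u (a : WeightFun p n) : ℕ := (-a.valp).toNat

/-- `|a| = Σ_i a_i`. -/
noncomputable def total (a : WeightFun p n) : ℚ := ∑ i, a.val i

/-- Restriction `a|_J` of a weight function to a set of indices. -/
noncomputable def restrict (a : WeightFun p n) (J : Finset (Fin n)) : WeightFun p n where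
  val i := if i ∈ J then a.val i else 0
  nonneg i := by by_cases h : i ∈ J <;> simp [h, a.nonneg i]
  mem_padicFrac i := by
    by_cases h : i ∈ J
    · simpa [h] using a.mem_padicFrac i
    · exact ⟨0, 0, by simp [h]⟩

/-- A weight function is `ℕ`-valued if each of its values is a natural number. -/
def NatValued (a : WeightFun p n) : Prop := ∀ i, ∃ c : ℕ, a.val i = (c : ℚ)

noncomputable instance [Fact p.Prime] : Add (WeightFun p n) where
  add a b :=
    { val := fun i => a.val i + b.val i
      nonneg := fun i => add_nonneg (a.nonneg i) (b.nonneg i)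
      mem_padicFrac := by
        intro i
        obtain ⟨c, m, hc⟩ := a.mem_padicFrac i
        obtain ⟨c', m', hc'⟩ := b.mem_padicFrac i
        have hp : (p : ℚ) ≠ 0 := Nat.cast_ne_zero.mpr (Fact.out : p.Prime).ne_zero
        refine ⟨c * p ^ m' + c' * p ^ m, m + m', ?_⟩
        show a.val i + b.val i = _
        rw [hc, hc']
        push_cast
        rw [pow_add]
        field_simp
        try ring }

end WeightFun

/-- The set `I_0` attached to a pair `(a, I)`: all elements of the support of `a`
that strictly precede every element of `I` for the order `⪯`. -/
noncomputable def block0 {p n : ℕ} (a : WeightFun p n) (I : Finset (Fin n)) : Finset (Fin n) :=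
  a.supp.filter fun i => ∀ j ∈ I, WeightFun.key a i < WeightFun.key a j

/-- The set `I_l` attached to `(a, I)` and anchored at `j = i_l ∈ I`: all elements of the
support of `a` lying between `i_l` (inclusive) and the next element of `I` (exclusive)
for the order `⪯`. -/
noncomputable def blockOf {p n : ℕ} (a : WeightFun p n) (I : Finset (Fin n)) (j : Fin n) :
    Finset (Fin n) :=
  a.supp.filter fun i => WeightFun.key a j ≤ WeightFun.key a i ∧
    ∀ j' ∈ I, WeightFun.key a j < WeightFun.key a j' → WeightFun.key a i < WeightFun.key a j'

/-- The list of the elements `i_1 ≺ i_2 ≺ ⋯ ≺ i_m` of `I`, sorted for the order `⪯`. -/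
noncomputable def sortedList {p n : ℕ} (a : WeightFun p n) (I : Finset (Fin n)) : List (Fin n) :=
  (Finset.sort (α := ℤ ×ₗ Fin n) (I.image (WeightFun.key a)) (· ≤ ·)).map fun x => (ofLex x).2

/-- The monomial `X^b = ∏ i, X i ^ b i`. -/
noncomputable def monom {n : ℕ} (k : Type) [CommRing k] (b : Fin n → ℕ) :
    MvPolynomial (Fin n) k :=
  ∏ i, MvPolynomial.X i ^ b i

/-- The exponents (natural numbers) of the weight function `p ^ m • (a|_J)`. -/
noncomputable def scaleExp {p n : ℕ} (a : WeightFun p n) (m : ℤ) (J : Finset (Fin n)) :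
    Fin n → ℕ :=
  fun i => if i ∈ J then ⌊(p : ℚ) ^ m * a.val i⌋₊ else 0

/-- The partitions of a weight function `c` of a given size `sz`: the subsets of the
support of `c` of cardinality `sz`. -/
noncomputable def partsOf {p n : ℕ} (c : WeightFun p n) (sz : ℕ) : Finset (Finset (Fin n)) :=
  c.supp.powerset.filter fun L => L.card = sz

/-- The de Rham-Witt complex `WΩ_{R/k}` of a commutative `k`-algebra `R`, as a differential
graded `W(k)`-algebra with `WΩ⁰_{R/k} ≅ W(R)`, together with its Frobenius `F`,
Verschiebung `V`, and the Teichmüller map (through `ι : W(R) →+* WΩ_{R/k}`). -/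
structure DRW (p : ℕ) [Fact p.Prime] (k : Type) [CommRing k] (R : Type) [CommRing R]
    [Algebra k R] where
  /-- the underlying (graded) ring -/
  Ω : Type
  [ringΩ : Ring Ω]
  /-- the grading -/
  grade : ℕ → AddSubgroup Ω
  /-- the differential -/
  d : Ω →+ Ω
  /-- the Frobenius -/
  F : Ω →+* Ω
  /-- the Verschiebung -/
  V : Ω →+ Ω
  /-- the inclusion of `W(R)` as `WΩ⁰` -/
  ι : WittVector p R →+* Ω
  /-- every integer prime to `p` is invertible (`WΩ` is a `ℤ_(p)`-algebra) -/
  natUnit : ∀ m : ℕ, ¬ p ∣ m → IsUnit ((m : ℕ) : Ω)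
  F_teich : ∀ r : R, F (ι (WittVector.teichmuller p r)) = ι (WittVector.teichmuller p (r ^ p))
  V_mul_F : ∀ x y : Ω, V (x * F y) = V x * y
  d_F_pow : ∀ (m : ℕ) (x : Ω), d ((⇑F)^[m] x) = (p : Ω) ^ m * (⇑F)^[m] (d x)
  F_pow_d_teich : ∀ (m : ℕ) (P : R),
    (⇑F)^[m] (d (ι (WittVector.teichmuller p P))) =
      ι (WittVector.teichmuller p (P ^ (p ^ m - 1))) * d (ι (WittVector.teichmuller p P))
  F_ι : ∀ w, F (ι w) = ι (WittVector.frobenius w)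
  V_ι : ∀ w, V (ι w) = ι (WittVector.verschiebung w)
  leibniz : ∀ (i j : ℕ) (x y : Ω), x ∈ grade i → y ∈ grade j →
    d (x * y) = (-1 : ℤ) ^ i • (x * d y) + (-1 : ℤ) ^ ((i + 1) * j) • (y * d x)

attribute [instance] DRW.ringΩ

namespace DRW

variable {p n : ℕ} [Fact p.Prime] {k : Type} [CommRing k]

/-- The Teichmüller representative `[P] ∈ WΩ` of a polynomial `P`. -/
noncomputable def tm (D : DRW p k (MvPolynomial (Fin n) k)) (P : MvPolynomial (Fin n) k) :
    D.Ω :=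
  D.ι (WittVector.teichmuller p P)

/-- The element `g(a) = F^{u(a)+val_p(a)} (d (V^{u(a)} ([X^{p^{-val_p(a)} a}])))`. -/
noncomputable def g (D : DRW p k (MvPolynomial (Fin n) k)) (a : WeightFun p n) : D.Ω :=
  (⇑D.F)^[a.valp.toNat]
    (D.d ((⇑D.V)^[a.u] (D.tm (monom k (scaleExp a (-a.valp) Finset.univ)))))

/-- The element `h(a, I) = ∏_{i ∈ Supp(a) ∖ I} [X_i]^{a_i} ∏_{j ∈ I} g(a|_{j})`, for an
`ℕ`-valued weight function `a` (the product over `I` taken in the order `⪯`). -/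
noncomputable def h (D : DRW p k (MvPolynomial (Fin n) k)) (a : WeightFun p n)
    (I : Finset (Fin n)) : D.Ω :=
  D.tm (monom k fun i => if i ∈ a.supp \ I then ⌊a.val i⌋₊ else 0) *
    ((sortedList a I).map fun j => D.g (a.restrict {j})).prod

/-- The basic element `e(η, a, I)` of the de Rham-Witt complex. -/
noncomputable def e (D : DRW p k (MvPolynomial (Fin n) k)) (η : WittVector p k)
    (a : WeightFun p n) (I : Finset (Fin n)) : D.Ω :=
  if block0 a I = ∅ ∧ a.u ≠ 0 then
    match sortedList a I with
    | [] => 0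
    | j :: js =>
        D.d ((⇑D.V)^[a.u] (D.ι (WittVector.map (algebraMap k (MvPolynomial (Fin n) k)) η) *
            D.tm (monom k (scaleExp a (a.u : ℤ) (blockOf a I j))))) *
          (js.map fun j' => D.g (a.restrict (blockOf a I j'))).prod
  else
    (⇑D.V)^[a.u] (D.ι (WittVector.map (algebraMap k (MvPolynomial (Fin n) k)) η) *
        D.tm (monom k (scaleExp a (a.u : ℤ) (block0 a I)))) *
      ((sortedList a I).map fun j => D.g (a.restrict (blockOf a I j))).prod

end DRW

/-- The de Rham-Witt complex of a polynomial algebra `k[X_1, …, X_n]`, together with the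
coefficient functions `(a, I) ↦ η_{a,I}` of the structure theorem of Langer-Zink:
every element is the unique convergent sum `x = Σ_{(a,I)} e(η_{a,I}, a, I)`. -/
structure DRWPoly (p n : ℕ) [Fact p.Prime] (k : Type) [CommRing k] extends
    DRW p k (MvPolynomial (Fin n) k) where
  /-- The coefficient `η_{a,I}` of `x` on the basic element `e(η_{a,I}, a, I)`. -/
  coeff : Ω → WeightFun p n → Finset (Fin n) → WittVector p k
  coeff_add : ∀ (x y : Ω) (a : WeightFun p n) (I : Finset (Fin n)),
    coeff (x + y) a I = coeff x a I + coeff y a I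
  coeff_e_self : ∀ (η : WittVector p k) (a : WeightFun p n) (I : Finset (Fin n)),
    I ⊆ a.supp → coeff (toDRW.e η a I) a I = η
  coeff_e_ne : ∀ (η : WittVector p k) (a : WeightFun p n) (I : Finset (Fin n)), I ⊆ a.supp →
    ∀ (b : WeightFun p n) (J : Finset (Fin n)), ¬(b = a ∧ J = I) → coeff (toDRW.e η a I) b J = 0
  coeff_ext : ∀ x y : Ω,
    (∀ (a : WeightFun p n) (I : Finset (Fin n)), I ⊆ a.supp → coeff x a I = coeff y a I) → x = y

/-- The `V`-adic pseudovaluation on `W(k)`: the largest `m` such that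
`η ∈ V^m(W(k))` (and `+∞` for `η = 0`). -/
noncomputable def valV {p : ℕ} [Fact p.Prime] {k : Type} [CommRing k]
    (η : WittVector p k) : EReal :=
  sSup {x : EReal | ∃ m : ℕ, x = ((m : ℝ) : EReal) ∧
    η ∈ Set.range ((⇑(WittVector.verschiebung : WittVector p k →+ WittVector p k))^[m])}

/-- The number of factors of `e(η, a, I)` (ignoring `η`): `#I` if `I_0 = ∅`,
and `#I + 1` otherwise. -/
noncomputable def cIdx {p n : ℕ} (a : WeightFun p n) (I : Finset (Fin n)) : ℕ :=
  if block0 a I = ∅ then I.card else I.card + 1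

/-- `ζ_ε` as a function of a family of coefficients indexed by `𝒫`:
`inf_{(a,I) ∈ 𝒫} (2n val_V (η_{a,I}) + c_I u(a) - ε |a|)`. -/
noncomputable def zetaFam {p : ℕ} (n : ℕ) [Fact p.Prime] {k : Type} [CommRing k] (ε : ℝ)
    (c : WeightFun p n → Finset (Fin n) → WittVector p k) : EReal :=
  ⨅ q : {q : WeightFun p n × Finset (Fin n) // q.2 ⊆ q.1.supp},
    (((2 * n : ℕ) : ℝ) : EReal) * valV (c q.1.1 q.1.2) +
      (((cIdx q.1.1 q.1.2 * q.1.1.u : ℕ) : ℝ) : EReal) -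
      ((ε * (q.1.1.total : ℝ) : ℝ) : EReal)

/-- `γ_ε` of Davis-Langer-Zink, as a function of a family of coefficients indexed by `𝒫`:
`inf_{(a,I) ∈ 𝒫} (val_V (η_{a,I}) + u(a) - ε |a|)`. -/
noncomputable def gammaFam {p : ℕ} (n : ℕ) [Fact p.Prime] {k : Type} [CommRing k] (ε : ℝ)
    (c : WeightFun p n → Finset (Fin n) → WittVector p k) : EReal :=
  ⨅ q : {q : WeightFun p n × Finset (Fin n) // q.2 ⊆ q.1.supp},
    valV (c q.1.1 q.1.2) + (((q.1.1.u : ℕ) : ℝ) : EReal) -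
      ((ε * (q.1.1.total : ℝ) : ℝ) : EReal)

namespace DRWPoly

variable {p n : ℕ} [Fact p.Prime] {k : Type} [CommRing k]

/-- The function `ζ_ε` on the de Rham-Witt complex. -/
noncomputable def zeta (D : DRWPoly p n k) (ε : ℝ) (x : D.Ω) : EReal :=
  zetaFam n ε (D.coeff x)

/-- The function `γ_ε` of Davis-Langer-Zink on the de Rham-Witt complex. -/
noncomputable def gamma (D : DRWPoly p n k) (ε : ℝ) (x : D.Ω) : EReal :=
  gammaFam n ε (D.coeff x)

/-- `ζ_ε (x|_int)`: the value of `ζ_ε` on the integral part of `x`. -/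
noncomputable def zetaInt (D : DRWPoly p n k) (ε : ℝ) (x : D.Ω) : EReal :=
  zetaFam n ε fun a I => if a.u = 0 then D.coeff x a I else 0

/-- `ζ_ε (x|_frp)`: the value of `ζ_ε` on the pure fractional part of `x`. -/
noncomputable def zetaFrp (D : DRWPoly p n k) (ε : ℝ) (x : D.Ω) : EReal :=
  zetaFam n ε fun a I => if a.u ≠ 0 ∧ block0 a I ≠ ∅ then D.coeff x a I else 0

/-- `ζ_ε (x|_d(frp))`: the value of `ζ_ε` on the exact pure fractional part of `x`. -/
noncomputable def zetaDfrp (D : DRWPoly p n k) (ε : ℝ) (x : D.Ω) : EReal :=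
  zetaFam n ε fun a I => if a.u ≠ 0 ∧ block0 a I = ∅ then D.coeff x a I else 0

/-- `x` is integral: `η_{a,I} = 0` whenever `u(a) ≠ 0`. -/
def IsIntegral (D : DRWPoly p n k) (x : D.Ω) : Prop :=
  ∀ (a : WeightFun p n) (I : Finset (Fin n)), I ⊆ a.supp → a.u ≠ 0 → D.coeff x a I = 0

/-- `x` is integral of pure degree `j`: integral, and `η_{a,I} = 0` whenever `#I ≠ j`. -/
def IsIntegralDeg (D : DRWPoly p n k) (j : ℕ) (x : D.Ω) : Prop :=
  ∀ (a : WeightFun p n) (I : Finset (Fin n)), I ⊆ a.supp →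
    (a.u ≠ 0 ∨ I.card ≠ j) → D.coeff x a I = 0

/-- `x` is fractional: `η_{a,I} = 0` whenever `u(a) = 0`. -/
def IsFrac (D : DRWPoly p n k) (x : D.Ω) : Prop :=
  ∀ (a : WeightFun p n) (I : Finset (Fin n)), I ⊆ a.supp → a.u = 0 → D.coeff x a I = 0

/-- `x` is pure fractional: `η_{a,I} = 0` whenever `u(a) = 0` or `I_0 = ∅`. -/
def IsFrp (D : DRWPoly p n k) (x : D.Ω) : Prop :=
  ∀ (a : WeightFun p n) (I : Finset (Fin n)), I ⊆ a.supp →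
    (a.u = 0 ∨ block0 a I = ∅) → D.coeff x a I = 0

/-- `x` belongs to `d(WΩ^frp)`. -/
def IsDFrp (D : DRWPoly p n k) (x : D.Ω) : Prop :=
  ∃ y : D.Ω, D.IsFrp y ∧ x = D.d y

end DRWPoly

/-- A pseudovaluation on a ring, with values in `ℝ ∪ {±∞}`. -/
structure IsPseudovaluation {A : Type} [Ring A] (v : A → EReal) : Prop where
  map_zero : v 0 = ⊤
  map_one : v 1 = 0
  map_neg : ∀ x, v (-x) = v x
  min_le_add : ∀ x y, min (v x) (v y) ≤ v (x + y)
  add_le_mul : ∀ x y, v x ≠ ⊥ → v y ≠ ⊥ → v x + v y ≤ v (x * y)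


section AuxLemmas

lemma iInf_ne_bot_iff' {ι : Sort*} (f : ι → EReal) :
    (⨅ i, f i) ≠ ⊥ ↔ ∃ M : ℝ, ∀ i, (M : EReal) ≤ f i := by
  constructor
  · intro h
    refine ⟨(⨅ i, f i).toReal, fun i => ?_⟩
    by_cases ht : (⨅ i, f i) = ⊤
    · have : (⊤ : EReal) ≤ f i := ht ▸ iInf_le f i
      exact le_trans le_top this
    · rw [EReal.coe_toReal ht h]; exact iInf_le f i
  · rintro ⟨M, hM⟩ hb
    have := le_iInf hM
    rw [hb, le_bot_iff] at this
    exact EReal.coe_ne_bot M this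

lemma valV_nonneg {p : ℕ} [Fact p.Prime] {k : Type} [CommRing k] (η : WittVector p k) :
    (0 : EReal) ≤ valV η := by
  apply le_sSup
  exact ⟨0, by simp, ⟨η, rfl⟩⟩

lemma valV_ne_bot {p : ℕ} [Fact p.Prime] {k : Type} [CommRing k] (η : WittVector p k) :
    valV η ≠ ⊥ := fun h => by
  have := valV_nonneg η
  rw [h, le_bot_iff] at this
  simp at this

lemma WeightFun.supp_nonempty_of_u_ne_zero {p n : ℕ} (a : WeightFun p n) (h : a.u ≠ 0) :
    a.supp.Nonempty := by
  by_contra hs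
  have : a.valp = 0 := by rw [WeightFun.valp, dif_neg hs]
  simp [WeightFun.u, this] at h

lemma cIdx_pos_of_u_ne_zero {p n : ℕ} (a : WeightFun p n) (I : Finset (Fin n))
    (h : a.u ≠ 0) : 0 < cIdx a I := by
  rw [cIdx]
  split_ifs with hb
  · rcases Finset.eq_empty_or_nonempty I with hI | hI
    · exfalso
      apply (a.supp_nonempty_of_u_ne_zero h).ne_empty
      have : block0 a I = a.supp := by
        rw [block0, hI]
        simp
      rw [← this, hb]
    · exact Finset.card_pos.mpr hI
  · omega

lemma u_le_cIdx_mul_u {p n : ℕ} (a : WeightFun p n) (I : Finset (Fin n)) :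
    a.u ≤ cIdx a I * a.u := by
  rcases Nat.eq_zero_or_pos a.u with h | h
  · omega
  · have := cIdx_pos_of_u_ne_zero a I h.ne'
    calc a.u = 1 * a.u := (one_mul _).symm
    _ ≤ cIdx a I * a.u := Nat.mul_le_mul_right _ this

lemma cIdx_le {p n : ℕ} (a : WeightFun p n) (I : Finset (Fin n)) :
    cIdx a I ≤ n + 1 := by
  have hI : I.card ≤ n := by
    simpa using Finset.card_le_univ I
  rw [cIdx]
  split_ifs <;> omega

lemma WeightFun.total_nonneg {p n : ℕ} (a : WeightFun p n) : 0 ≤ a.total :=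
  Finset.sum_nonneg fun i _ => a.nonneg i

/-- Pointwise inequality for the forward direction (`n ≥ 1`). -/
lemma key_forward {n : ℕ} (hn : 0 < n) (V : EReal) (hV : 0 ≤ V) (U C T M : ℝ)
    (hU : 0 ≤ U) (hUC : U ≤ C)
    (h : (M : EReal) ≤ V + (U : EReal) - (T : EReal)) :
    (M : EReal) ≤ (((2 * n : ℕ) : ℝ) : EReal) * V + (C : EReal) - (T : EReal) := by
  induction V using EReal.rec with
  | bot => exact absurd hV (by simp)
  | top =>
    have h1 : (((2 * n : ℕ) : ℝ) : EReal) * (⊤ : EReal) = ⊤ := by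
      apply EReal.coe_mul_top_of_pos
      positivity
    rw [h1]
    rw [show ((⊤ : EReal) + (C : EReal) - (T : EReal)) = ⊤ by
      rw [EReal.top_add_coe, EReal.top_sub_coe]]
    exact le_top
  | coe r =>
    have hr : (0 : ℝ) ≤ r := by exact_mod_cast hV
    rw [show ((r : EReal) + (U : EReal) - (T : EReal)) = ((r + U - T : ℝ) : EReal) by
      push_cast; ring] at h
    rw [show ((((2 * n : ℕ) : ℝ) : EReal) * (r : EReal) + (C : EReal) - (T : EReal))
        = ((((2 * n : ℕ) : ℝ) * r + C - T : ℝ) : EReal) by push_cast; ring]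
    rw [EReal.coe_le_coe_iff] at h ⊢
    have h2n : (1 : ℝ) ≤ ((2 * n : ℕ) : ℝ) := by
      have : (1 : ℕ) ≤ 2 * n := by omega
      exact_mod_cast this
    nlinarith

/-- Pointwise inequality for the backward direction. -/
lemma key_backward {n : ℕ} (V : EReal) (hV : 0 ≤ V) (U C t ε' M : ℝ)
    (hU : 0 ≤ U) (hC : C ≤ (2 * (n : ℝ) + 2) * U) (ht : 0 ≤ t) (hε' : 0 < ε')
    (h : (M : EReal) ≤ (((2 * n : ℕ) : ℝ) : EReal) * V + (C : EReal) - ((ε' * t : ℝ) : EReal)) :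
    ((M / (2 * (n : ℝ) + 2) : ℝ) : EReal)
      ≤ V + (U : EReal) - ((ε' / (2 * (n : ℝ) + 2) * t : ℝ) : EReal) := by
  induction V using EReal.rec with
  | bot => exact absurd hV (by simp)
  | top =>
    rw [show ((⊤ : EReal) + (U : EReal) - ((ε' / (2 * (n : ℝ) + 2) * t : ℝ) : EReal)) = ⊤ by
      rw [EReal.top_add_coe, EReal.top_sub_coe]]
    exact le_top
  | coe r =>
    have hr : (0 : ℝ) ≤ r := by exact_mod_cast hV
    rw [show ((((2 * n : ℕ) : ℝ) : EReal) * (r : EReal) + (C : EReal) - ((ε' * t : ℝ) : EReal))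
        = ((((2 * n : ℕ) : ℝ) * r + C - ε' * t : ℝ) : EReal) by push_cast; ring] at h
    rw [show ((r : EReal) + (U : EReal) - ((ε' / (2 * (n : ℝ) + 2) * t : ℝ) : EReal))
        = ((r + U - ε' / (2 * (n : ℝ) + 2) * t : ℝ) : EReal) by push_cast; ring]
    rw [EReal.coe_le_coe_iff] at h ⊢
    have hK : (0 : ℝ) < 2 * (n : ℝ) + 2 := by positivity
    have hfield : ε' / (2 * (n : ℝ) + 2) * t * (2 * (n : ℝ) + 2) = ε' * t := by field_simp
    rw [div_le_iff₀ hK]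
    have h2n : ((2 * n : ℕ) : ℝ) = 2 * (n : ℝ) := by push_cast; ring
    rw [h2n] at h
    nlinarith [hfield, mul_nonneg hr hK.le]

lemma WeightFun.u_eq_zero_of_n_zero {p : ℕ} (a : WeightFun p 0) : a.u = 0 := by
  have hs : a.supp = ∅ := Finset.eq_empty_of_isEmpty _
  have : a.valp = 0 := by rw [WeightFun.valp, dif_neg (by simp [hs])]
  simp [WeightFun.u, this]

lemma WeightFun.total_eq_zero_of_n_zero {p : ℕ} (a : WeightFun p 0) : a.total = 0 := by
  simp [WeightFun.total]

end AuxLemmas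

/-- For every `x` in the de Rham-Witt complex, there is `ε > 0` with `γ_ε(x) ≠ -∞` if and
only if there is `ε' > 0` with `ζ_{ε'}(x) ≠ -∞`: the functions `ζ` define the same
overconvergent de Rham-Witt complex as the functions `γ` of Davis-Langer-Zink. -/
theorem exists_gamma_ne_bot_iff_exists_zeta_ne_bot (p n : ℕ) [Fact p.Prime] (k : Type)
    [CommRing k] [CharP k p] (D : DRWPoly p n k) (x : D.Ω) :
    (∃ ε : ℝ, 0 < ε ∧ D.gamma ε x ≠ ⊥) ↔ ∃ ε : ℝ, 0 < ε ∧ D.zeta ε x ≠ ⊥ := by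
  constructor
  · rintro ⟨ε, hε, h⟩
    rcases Nat.eq_zero_or_pos n with hn | hn
    · subst hn
      refine ⟨1, one_pos, ?_⟩
      rw [DRWPoly.zeta, zetaFam, iInf_ne_bot_iff']
      refine ⟨0, fun q => ?_⟩
      have hu : q.1.1.u = 0 := q.1.1.u_eq_zero_of_n_zero
      have htot : q.1.1.total = 0 := q.1.1.total_eq_zero_of_n_zero
      rw [hu, htot]
      simp
    · refine ⟨ε, hε, ?_⟩
      rw [DRWPoly.gamma, gammaFam, iInf_ne_bot_iff'] at h
      obtain ⟨M, hM⟩ := h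
      rw [DRWPoly.zeta, zetaFam, iInf_ne_bot_iff']
      refine ⟨M, fun q => ?_⟩
      have hUC : ((q.1.1.u : ℕ) : ℝ) ≤ ((cIdx q.1.1 q.1.2 * q.1.1.u : ℕ) : ℝ) := by
        exact_mod_cast u_le_cIdx_mul_u q.1.1 q.1.2
      exact key_forward hn _ (valV_nonneg _) _ _ _ M (by positivity) hUC (hM q)
  · rintro ⟨ε', hε', h⟩
    refine ⟨ε' / (2 * (n : ℝ) + 2), by positivity, ?_⟩
    rw [DRWPoly.zeta, zetaFam, iInf_ne_bot_iff'] at h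
    obtain ⟨M, hM⟩ := h
    rw [DRWPoly.gamma, gammaFam, iInf_ne_bot_iff']
    refine ⟨M / (2 * (n : ℝ) + 2), fun q => ?_⟩
    have hC : ((cIdx q.1.1 q.1.2 * q.1.1.u : ℕ) : ℝ) ≤ (2 * (n : ℝ) + 2) * ((q.1.1.u : ℕ) : ℝ) := by
      have h1 : cIdx q.1.1 q.1.2 * q.1.1.u ≤ (2 * n + 2) * q.1.1.u := by
        have := cIdx_le q.1.1 q.1.2
        exact Nat.mul_le_mul_right _ (by omega)
      calc ((cIdx q.1.1 q.1.2 * q.1.1.u : ℕ) : ℝ) ≤ (((2 * n + 2) * q.1.1.u : ℕ) : ℝ) := by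
            exact_mod_cast h1
      _ = (2 * (n : ℝ) + 2) * ((q.1.1.u : ℕ) : ℝ) := by push_cast; ring
    have ht : (0 : ℝ) ≤ (q.1.1.total : ℝ) := by exact_mod_cast q.1.1.total_nonneg
    exact key_backward _ (valV_nonneg _) _ _ _ _ M (by positivity) hC ht hε' (hM q)
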